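/- If the base category B has pushouts, then the category of Σ-sketches has pushouts: given sketch morphisms φ : K → G and ψ : K → H, the pushout context P of the underlying span together with the union of the translated constraint sets Ctr(φ')(C_G) ∪ Ctr(ψ')(C_H) (φ', ψ' the pushout injections) is a pushout in Sketch(Σ). -/

import Mathlib

open CategoryTheory

universe u v

variable {B : Type u} [Category.{v} B]

/-- A footprint: a set of feature symbols with arities in the base category. -/
structure Footprint (B : Type u) [Category.{v} B] where
  P : Type
  ar : P → B

variable {Sg : Footprint B}

/-- A Σ-structure: a carrier object plus a set of valid interpretations for each symbol. -/
structure Str (Sg : Footprint B) where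
  carrier : B
  sem : ∀ p : Sg.P, Set (Sg.ar p ⟶ carrier)

/-- Homomorphisms of Σ-structures: truth of features is preserved. -/
def IsHom (U V : Str Sg) (ς : U.carrier ⟶ V.carrier) : Prop :=
  ∀ (p : Sg.P) (ι : Sg.ar p ⟶ U.carrier), ι ∈ U.sem p → ι ≫ ς ∈ V.sem p

/-- First-order feature expressions with arity an object of the base category. -/
inductive Expr (Sg : Footprint B) : B → Type (max u v)
  | atom {X : B} (p : Sg.P) (a : Sg.ar p ⟶ X) : Expr Sg X
  | top (X : B) : Expr Sg X
  | bot (X : B) : Expr Sg X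
  | and {X : B} : Expr Sg X → Expr Sg X → Expr Sg X
  | or {X : B} : Expr Sg X → Expr Sg X → Expr Sg X
  | not {X : B} : Expr Sg X → Expr Sg X
  | cex {X Y : B} (t : X ⟶ Y) : Expr Sg X → Expr Sg Y → Expr Sg X
  | call {X Y : B} (t : X ⟶ Y) : Expr Sg X → Expr Sg Y → Expr Sg X

/-- Semantics of feature expressions: the set of solutions in a Σ-structure. -/
def Expr.sem (U : Str Sg) : ∀ {X : B}, Expr Sg X → Set (X ⟶ U.carrier)
  | _, .atom p a => {ι | a ≫ ι ∈ U.sem p}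
  | _, .top _ => Set.univ
  | _, .bot _ => ∅
  | _, .and e₁ e₂ => e₁.sem U ∩ e₂.sem U
  | _, .or e₁ e₂ => e₁.sem U ∪ e₂.sem U
  | _, .not e => (e.sem U)ᶜ
  | _, .cex t e₁ e₂ => {ι | ι ∈ e₁.sem U → ∃ κ, t ≫ κ = ι ∧ κ ∈ e₂.sem U}
  | _, .call t e₁ e₂ => {ι | ι ∈ e₁.sem U → ∀ κ, t ≫ κ = ι → κ ∈ e₂.sem U}

/-- A Σ-constraint on a context `K`: an expression with arity `X` and a binding `X ⟶ K`. -/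
structure Constr (Sg : Footprint B) (K : B) where
  X : B
  e : Expr Sg X
  b : X ⟶ K

/-- Translation of constraints along a context morphism (post-composition of bindings). -/
def Constr.map {K G : B} (φ : K ⟶ G) (c : Constr Sg K) : Constr Sg G :=
  ⟨c.X, c.e, c.b ≫ φ⟩

/-- An interpretation of a context `K` in a Σ-structure. -/
structure Interp (Sg : Footprint B) (K : B) where
  U : Str Sg
  ι : K ⟶ U.carrier

/-- Reduct of interpretations along a context morphism (pre-composition). -/
def Interp.reduct {K G : B} (φ : K ⟶ G) (I : Interp Sg G) : Interp Sg K :=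
  ⟨I.U, φ ≫ I.ι⟩

/-- Satisfaction of a constraint by an interpretation. -/
def Interp.Sat {K : B} (I : Interp Sg K) (c : Constr Sg K) : Prop :=
  c.b ≫ I.ι ∈ c.e.sem I.U

/-- Semantic entailment between sets of constraints on a fixed context. -/
def Entails {K : B} (C D : Set (Constr Sg K)) : Prop :=
  ∀ I : Interp Sg K, (∀ c ∈ C, I.Sat c) → ∀ d ∈ D, I.Sat d

/-- A Σ-sketch: a context together with a set of constraints on it. -/
structure Sketch (Sg : Footprint B) where
  K : B
  C : Set (Constr Sg K)

/-- Sketch morphisms: context morphisms whose translated source constraints are entailed. -/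
def IsSketchMor (S T : Sketch Sg) (φ : S.K ⟶ T.K) : Prop :=
  Entails T.C (Constr.map φ '' S.C)

/-- A model of a sketch: an interpretation satisfying all its constraints. -/
def Interp.IsModel (S : Sketch Sg) (I : Interp Sg S.K) : Prop :=
  ∀ c ∈ S.C, I.Sat c

/-- Conservativity (model-expansiveness) of a Σ-structure w.r.t. a sketch rule `L ⇒^φ R`. -/
def Conservative (U : Str Sg) (L R : Sketch Sg) (φ : L.K ⟶ R.K) : Prop :=
  ∀ ι : L.K ⟶ U.carrier, Interp.IsModel L ⟨U, ι⟩ →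
    ∃ κ : R.K ⟶ U.carrier, φ ≫ κ = ι ∧ Interp.IsModel R ⟨U, κ⟩

open Limits in
/-- The pushout sketch: pushout of contexts with the union of translated constraints. -/
noncomputable def pushoutSketch [HasPushouts B] {S : Sketch Sg} (T R : Sketch Sg)
    (φ : S.K ⟶ T.K) (ψ : S.K ⟶ R.K) : Sketch Sg :=
  ⟨pushout φ ψ, Constr.map (pushout.inl φ ψ) '' T.C ∪ Constr.map (pushout.inr φ ψ) '' R.C⟩

open Limits in
/-- If the base category has pushouts then the category of Σ-sketches has pushouts, constructed
as the pushout of contexts together with the union of the translated constraint sets. -/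
theorem stmt12 (Sg : Footprint B) [HasPushouts B] (S T R : Sketch Sg)
    (φ : S.K ⟶ T.K) (ψ : S.K ⟶ R.K) (hφ : IsSketchMor S T φ) (hψ : IsSketchMor S R ψ) :
    IsSketchMor T (pushoutSketch T R φ ψ) (pushout.inl φ ψ) ∧
    IsSketchMor R (pushoutSketch T R φ ψ) (pushout.inr φ ψ) ∧
    φ ≫ pushout.inl φ ψ = ψ ≫ pushout.inr φ ψ ∧
    (∀ (Q : Sketch Sg) (g : T.K ⟶ Q.K) (h : R.K ⟶ Q.K),
      IsSketchMor T Q g → IsSketchMor R Q h → φ ≫ g = ψ ≫ h →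
      ∃! u : (pushoutSketch T R φ ψ).K ⟶ Q.K,
        pushout.inl φ ψ ≫ u = g ∧ pushout.inr φ ψ ≫ u = h ∧
        IsSketchMor (pushoutSketch T R φ ψ) Q u) := by
  refine ⟨?_, ?_, pushout.condition, ?_⟩
  · intro I hI d hd
    exact hI d (Or.inl hd)
  · intro I hI d hd
    exact hI d (Or.inr hd)
  · intro Q g h hg hh w
    have e1 : pushout.inl φ ψ ≫ pushout.desc g h w = g := pushout.inl_desc _ _ _
    have e2 : pushout.inr φ ψ ≫ pushout.desc g h w = h := pushout.inr_desc _ _ _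
    refine ⟨pushout.desc g h w, ⟨pushout.inl_desc _ _ _, pushout.inr_desc _ _ _, ?_⟩, ?_⟩
    · intro I hI d hd
      obtain ⟨c, hc, rfl⟩ := hd
      rcases hc with ⟨c', hc', rfl⟩ | ⟨c', hc', rfl⟩
      · have := hg I hI (Constr.map g c') ⟨c', hc', rfl⟩
        simp only [Constr.map, Interp.Sat] at this ⊢
        rw [← e1, ← Category.assoc] at this
        exact this
      · have := hh I hI (Constr.map h c') ⟨c', hc', rfl⟩
        simp only [Constr.map, Interp.Sat] at this ⊢
        rw [← e2, ← Category.assoc] at this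
        exact this
    · rintro u ⟨h1, h2, -⟩
      apply pushout.hom_ext <;> simp [h1, h2]
      exacts [e1.symm, e2.symm]
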